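/- If ψ is a translation on a graph G with associated digraph D_ψ, then the inverse function ψ^{-1} (obtained by reversing all directed edges of D_ψ) is also a translation on G, and loss(ψ) = loss(ψ^{-1}). -/

import Mathlib

open Finset

def IsTransformation {V : Type*} (φ : V → Option V) : Prop :=
  ∀ v1 v2 w : V, φ v1 = some w → φ v2 = some w → v1 = v2

def IsEC {V : Type*} (G : SimpleGraph V) (φ : V → Option V) : Prop :=
  ∀ v w : V, φ v = some w → G.Adj v w

def IsSNP {V : Type*} (G : SimpleGraph V) (φ : V → Option V) : Prop :=
  ∀ v1 v2 w1 w2 : V, φ v1 = some w1 → φ v2 = some w2 → (G.Adj v1 v2 ↔ G.Adj w1 w2)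

def IsTranslation {V : Type*} (G : SimpleGraph V) (φ : V → Option V) : Prop :=
  IsTransformation φ ∧ IsEC G φ ∧ IsSNP G φ

def loss {V : Type*} [Fintype V] [DecidableEq V] (φ : V → Option V) : ℕ :=
  (Finset.univ.filter (fun v => φ v = none)).card

def Prec {V : Type*} [Fintype V] [DecidableEq V] (φ1 φ2 : V → Option V) : Prop :=
  loss φ2 < loss φ1 ∧ ∃ v w : V, φ1 v = some w ∧ φ2 v = some w

def IsMinimalTranslation {V : Type*} [Fintype V] [DecidableEq V]
    (G : SimpleGraph V) (φ : V → Option V) : Prop :=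
  IsTranslation G φ ∧ ∀ φ2 : V → Option V, IsTranslation G φ2 → ¬ Prec φ φ2

theorem stmt_7 {V : Type*} [Fintype V] [DecidableEq V] (G : SimpleGraph V)
    (ψ ψinv : V → Option V) (hψ : IsTranslation G ψ)
    (hinv : ∀ v w : V, ψinv w = some v ↔ ψ v = some w) :
    IsTranslation G ψinv ∧ loss ψ = loss ψinv := by
  obtain ⟨htr, hec, hsnp⟩ := hψ
  constructor
  · refine ⟨?_, ?_, ?_⟩
    · intro v1 v2 w h1 h2
      rw [hinv] at h1 h2
      rw [h1] at h2; exact Option.some_injective _ h2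
    · intro v w h
      rw [hinv] at h
      exact (hec w v h).symm
    · intro v1 v2 w1 w2 h1 h2
      rw [hinv] at h1 h2
      exact (hsnp w1 w2 v1 v2 h1 h2).symm
  · unfold loss
    have key : ((univ : Finset V).filter fun v => ¬ ψ v = none).card =
        ((univ : Finset V).filter fun w => ¬ ψinv w = none).card := by
      apply Finset.card_bij (fun v _ => (ψ v).get (by simp_all [Option.ne_none_iff_isSome]))
      · intro v hv
        simp only [mem_filter, mem_univ, true_and] at hv ⊢
        intro hcon
        have : ψ v = some ((ψ v).get (Option.ne_none_iff_isSome.mp hv)) := by simp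
        have := (hinv v ((ψ v).get (Option.ne_none_iff_isSome.mp hv))).mpr this
        rw [hcon] at this; exact nomatch this
      · intro v1 h1 v2 h2 heq
        simp only [mem_filter, mem_univ, true_and] at h1 h2
        have e1 : ψ v1 = some ((ψ v1).get (Option.ne_none_iff_isSome.mp h1)) := by simp
        have e2 : ψ v2 = some ((ψ v2).get (Option.ne_none_iff_isSome.mp h2)) := by simp
        exact htr v1 v2 _ e1 (by rw [e2, heq])
      · intro w hw
        simp only [mem_filter, mem_univ, true_and] at hw
        obtain ⟨v, hv⟩ := Option.ne_none_iff_exists'.mp hw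
        have hv' := (hinv v w).mp hv
        refine ⟨v, by simp [mem_filter, hv'], ?_⟩
        simp [hv']
    have c1 := Finset.card_filter_add_card_filter_not
      (p := fun v => ψ v = none) (s := (univ : Finset V))
    have c2 := Finset.card_filter_add_card_filter_not
      (p := fun v => ψinv v = none) (s := (univ : Finset V))
    omega
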